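/- Let U ⊆ ℝ^m be a connected open set and let f : U → ℝ^n be real-analytic. If f is not identically zero on U, then the zero set Z(f) = {x ∈ U : f(x) = 0} has Lebesgue measure zero in ℝ^m. -/

import Mathlib

open MeasureTheory Set Metric


lemma null_of_line_unique {m : ℕ} (c : Fin (m + 1))
    {A : Set (EuclideanSpace ℝ (Fin (m + 1)))} (hA : MeasurableSet A)
    (hline : ∀ a ∈ A, ∀ t : ℝ, a + t • EuclideanSpace.single c (1:ℝ) ∈ A → t = 0) :
    volume A = 0 := by
  classical
  set e1 := (MeasurableEquiv.toLp 2 (Fin (m + 1) → ℝ)).symm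
  set e2 := MeasurableEquiv.piFinSuccAbove (fun _ : Fin (m + 1) => ℝ) c
  set e3 : ℝ × (Fin m → ℝ) ≃ᵐ (Fin m → ℝ) × ℝ := MeasurableEquiv.prodComm
  set e := (e1.trans e2).trans e3 with he
  have h3 : MeasurePreserving e3 (volume.prod volume) (volume.prod volume) :=
    Measure.measurePreserving_swap
  have hmp : MeasurePreserving e volume (volume.prod volume) := by
    have h1 := EuclideanSpace.volume_preserving_symm_measurableEquiv_toLp (Fin (m + 1))
    have h2 := volume_preserving_piFinSuccAbove (fun _ : Fin (m + 1) => ℝ) c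
    rw [Measure.volume_eq_prod ℝ (Fin m → ℝ)] at h2
    exact h3.comp (h2.comp h1)
  have himg : volume A = (volume.prod volume) (e '' A) := by
    rw [MeasurableEquiv.image_eq_preimage_symm]
    exact (hmp.symm e).measure_preimage (hA.nullMeasurableSet) |>.symm
  rw [himg]
  rw [Measure.measure_prod_null (e.measurableSet_image.2 hA)]
  refine Filter.Eventually.of_forall fun x => ?_
  -- slice: {t : ℝ | (x, t) ∈ e '' A}
  have hsub : (Prod.mk x ⁻¹' (e '' A)).Subsingleton := by
    intro s hs t ht
    simp only [mem_preimage, MeasurableEquiv.image_eq_preimage_symm, mem_preimage] at hs ht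
    have hzs : e.symm (x, s) ∈ A := hs
    have hzt : e.symm (x, t) ∈ A := ht
    have key : e.symm (x, t) = e.symm (x, s) + (t - s) • EuclideanSpace.single c (1:ℝ) := by
      show WithLp.toLp 2 ((Fin.insertNthEquiv (fun _ : Fin (m+1) => ℝ) c) (t, x)) =
        WithLp.toLp 2 ((Fin.insertNthEquiv (fun _ : Fin (m+1) => ℝ) c) (s, x)) + _
      refine PiLp.ext ((Fin.forall_iff_succAbove c).2 ⟨?_, fun j => ?_⟩) <;>
        simp [Fin.insertNthEquiv, EuclideanSpace.single_apply, Fin.succAbove_ne,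
          PiLp.add_apply, PiLp.smul_apply]
    have := hline _ hzs (t - s) (key ▸ hzt)
    linarith [sub_eq_zero.mp this]
  exact hsub.measure_zero _

lemma loc_null {m k : ℕ} {U : Set (EuclideanSpace ℝ (Fin m))} (hU : IsOpen U)
    {g : EuclideanSpace ℝ (Fin m) → ℝ} (hg : AnalyticOnNhd ℝ g U)
    {y : EuclideanSpace ℝ (Fin m)} (hyU : y ∈ U)
    (hDk1 : iteratedFDeriv ℝ (k + 1) g y ≠ 0) :
    ∃ r > 0, Metric.ball y r ⊆ U ∧
      volume {z ∈ Metric.ball y r | iteratedFDeriv ℝ k g z = 0} = 0 := by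
  classical
  -- find a tuple of basis vectors where the (k+1)-st derivative is nonzero
  obtain ⟨j, hj⟩ : ∃ j : Fin (k + 1) → Fin m,
      iteratedFDeriv ℝ (k + 1) g y (fun i => EuclideanSpace.single (j i) (1:ℝ)) ≠ 0 := by
    by_contra hcon
    push_neg at hcon
    apply hDk1
    have hml : (iteratedFDeriv ℝ (k + 1) g y).toMultilinearMap =
        (0 : MultilinearMap ℝ (fun _ : Fin (k+1) => EuclideanSpace ℝ (Fin m)) ℝ) := by
      apply Module.Basis.ext_multilinear (fun _ => (EuclideanSpace.basisFun (Fin m) ℝ).toBasis)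
      intro j'
      simpa [EuclideanSpace.basisFun_apply] using hcon j'
    ext v
    have := congrArg (fun F => F v) hml
    simpa using this
  obtain ⟨m', rfl⟩ : ∃ m', m = m' + 1 :=
    Nat.exists_eq_succ_of_ne_zero (Nat.pos_iff_ne_zero.1 (Fin.pos (j 0)))
  set w : EuclideanSpace ℝ (Fin (m' + 1)) := EuclideanSpace.single (j 0) (1:ℝ) with hw
  set vs : Fin k → EuclideanSpace ℝ (Fin (m' + 1)) := fun i => EuclideanSpace.single (j i.succ) (1:ℝ) with hvs
  set h : EuclideanSpace ℝ (Fin (m' + 1)) → ℝ := fun z => iteratedFDeriv ℝ k g z vs with hh_def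
  have hH : AnalyticOnNhd ℝ (iteratedFDeriv ℝ k g) U := hg.iteratedFDeriv k
  set L : ContinuousMultilinearMap ℝ (fun _ : Fin k => EuclideanSpace ℝ (Fin (m' + 1))) ℝ →L[ℝ] ℝ :=
    ContinuousMultilinearMap.apply ℝ (fun _ : Fin k => EuclideanSpace ℝ (Fin (m' + 1))) ℝ vs with hL
  have hh : AnalyticOnNhd ℝ h U := fun z hz => (L.analyticAt _).comp (hH z hz)
  -- the derivative of h in direction w equals the (k+1)-st derivative of g on basis vectors
  have hfd : ∀ z ∈ U, fderiv ℝ h z w = iteratedFDeriv ℝ (k + 1) g z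
      (fun i => EuclideanSpace.single (j i) (1:ℝ)) := by
    intro z hz
    have hdH : HasFDerivAt (iteratedFDeriv ℝ k g)
        (fderiv ℝ (iteratedFDeriv ℝ k g) z) z :=
      ((hH z hz).differentiableAt).hasFDerivAt
    have hcomp : HasFDerivAt h (L.comp (fderiv ℝ (iteratedFDeriv ℝ k g) z)) z :=
      L.hasFDerivAt.comp z hdH
    rw [hcomp.fderiv]
    rw [iteratedFDeriv_succ_apply_left]
    rfl
  -- choose a ball where the directional derivative of h doesn't vanish
  have hcont : ContinuousOn (fun z => fderiv ℝ h z w) U :=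
    (hh.fderiv.continuousOn).clm_apply continuousOn_const
  have hVopen : IsOpen (U ∩ (fun z => fderiv ℝ h z w) ⁻¹' ({0}ᶜ)) :=
    hcont.isOpen_inter_preimage hU isOpen_compl_singleton
  have hyV : y ∈ U ∩ (fun z => fderiv ℝ h z w) ⁻¹' ({0}ᶜ) := by
    refine ⟨hyU, ?_⟩
    simp only [mem_preimage, mem_compl_iff, mem_singleton_iff]
    rw [hfd y hyU]
    exact hj
  obtain ⟨r, hr, hball⟩ := Metric.isOpen_iff.1 hVopen y hyV
  have hballU : Metric.ball y r ⊆ U := fun z hz => (hball hz).1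
  have hne : ∀ z ∈ Metric.ball y r, fderiv ℝ h z w ≠ 0 := fun z hz => (hball hz).2
  refine ⟨r, hr, hballU, ?_⟩
  -- the zero set of the k-th derivative is inside the zero set of h
  have hsub : {z ∈ Metric.ball y r | iteratedFDeriv ℝ k g z = 0} ⊆
      {z ∈ Metric.ball y r | h z = 0} := by
    rintro z ⟨hz, hz0⟩
    exact ⟨hz, by rw [hh_def]; simp [hz0]⟩
  refine measure_mono_null hsub ?_
  -- measurability of the zero set of h in the ball
  have hAmeas : MeasurableSet {z ∈ Metric.ball y r | h z = 0} := by
    have ho : IsOpen (Metric.ball y r ∩ h ⁻¹' ({0}ᶜ)) :=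
      (hh.continuousOn.mono hballU).isOpen_inter_preimage Metric.isOpen_ball
        isOpen_compl_singleton
    have : {z ∈ Metric.ball y r | h z = 0} =
        Metric.ball y r \ (Metric.ball y r ∩ h ⁻¹' ({0}ᶜ)) := by
      ext z
      simp only [mem_setOf_eq, mem_diff, mem_inter_iff, mem_preimage, mem_compl_iff,
        mem_singleton_iff]
      tauto
    rw [this]
    exact measurableSet_ball.diff ho.measurableSet
  -- line uniqueness via Rolle
  apply null_of_line_unique (j 0) hAmeas
  rintro a ⟨haB, ha0⟩ t htA
  rw [← hw] at htA
  obtain ⟨hbB, hb0⟩ := htA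
  by_contra ht
  -- the segment from a to a + t • w lies in the ball
  have hseg : ∀ s ∈ uIcc (0:ℝ) t, a + s • w ∈ Metric.ball y r := by
    intro s hs
    have hconv : Convex ℝ (Metric.ball y r) := convex_ball y r
    have hmem : a + s • w ∈ segment ℝ a (a + t • w) := by
      refine ⟨1 - s / t, s / t, ?_, ?_, by ring, ?_⟩
      · obtain ⟨h1, h2⟩ := hs
        rcases lt_or_gt_of_ne ht with htneg | htpos
        · rw [inf_eq_right.2 htneg.le] at h1
          have : s / t ≤ 1 := by
            rw [div_le_one_iff]
            right; right; exact ⟨htneg, h1⟩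
          linarith
        · rw [sup_eq_right.2 htpos.le] at h2
          have : s / t ≤ 1 := by
            rw [div_le_one htpos]; exact h2
          linarith
      · obtain ⟨h1, h2⟩ := hs
        rcases lt_or_gt_of_ne ht with htneg | htpos
        · rw [sup_eq_left.2 htneg.le] at h2
          exact div_nonneg_of_nonpos h2 htneg.le
        · rw [inf_eq_left.2 htpos.le] at h1
          exact div_nonneg h1 htpos.le
      · have hst : (s / t) * t = s := div_mul_cancel₀ s ht
        rw [smul_add, ← add_assoc, ← add_smul, smul_smul, hst]
        rw [sub_add_cancel, one_smul]
    exact hconv.segment_subset haB hbB hmem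
  set φ : ℝ → ℝ := fun s => h (a + s • w) with hφ
  have hφd : ∀ s ∈ uIcc (0:ℝ) t, HasDerivAt φ (fderiv ℝ h (a + s • w) w) s := by
    intro s hs
    have hz : a + s • w ∈ Metric.ball y r := hseg s hs
    have hline : HasDerivAt (fun s : ℝ => a + s • w) w s := by
      simpa using ((hasDerivAt_id s).smul_const w).const_add a
    have hhz : HasFDerivAt h (fderiv ℝ h (a + s • w)) (a + s • w) :=
      ((hh _ (hballU hz)).differentiableAt).hasFDerivAt
    exact hhz.comp_hasDerivAt s hline
  have hφ0 : φ 0 = 0 := by simpa [hφ] using ha0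
  have hφt : φ t = 0 := hb0
  rcases lt_or_gt_of_ne ht with htneg | htpos
  · obtain ⟨c, hc, hc0⟩ := exists_hasDerivAt_eq_zero (f := φ)
      (f' := fun s => fderiv ℝ h (a + s • w) w) htneg
      (fun s hs => ((hφd s (Icc_subset_uIcc' hs)).continuousAt).continuousWithinAt)
      (hφt.trans hφ0.symm)
      (fun s hs => hφd s (Icc_subset_uIcc' (Ioo_subset_Icc_self hs)))
    exact hne _ (hseg c (Icc_subset_uIcc' (Ioo_subset_Icc_self hc))) hc0
  · obtain ⟨c, hc, hc0⟩ := exists_hasDerivAt_eq_zero (f := φ)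
      (f' := fun s => fderiv ℝ h (a + s • w) w) htpos
      (fun s hs => ((hφd s (Icc_subset_uIcc hs)).continuousAt).continuousWithinAt)
      (hφ0.trans hφt.symm)
      (fun s hs => hφd s (Icc_subset_uIcc (Ioo_subset_Icc_self hs)))
    exact hne _ (hseg c (Icc_subset_uIcc (Ioo_subset_Icc_self hc))) hc0

/-- Zero sets of nontrivial real-analytic maps have Lebesgue measure zero. -/
theorem stmt_0 {m n : ℕ} (U : Set (EuclideanSpace ℝ (Fin m)))
    (hU : IsOpen U) (hconn : IsConnected U)
    (f : EuclideanSpace ℝ (Fin m) → EuclideanSpace ℝ (Fin n))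
    (hf : AnalyticOnNhd ℝ f U)
    (hnz : ∃ x ∈ U, f x ≠ 0) :
    volume {x ∈ U | f x = 0} = 0 := by
  classical
  obtain ⟨x₀, hx₀U, hx₀⟩ := hnz
  obtain ⟨i₀, hi₀⟩ : ∃ i, f x₀ i ≠ 0 := by
    by_contra hcon
    push_neg at hcon
    exact hx₀ (PiLp.ext hcon)
  set g : EuclideanSpace ℝ (Fin m) → ℝ := fun z => f z i₀ with hgdef
  have hg : AnalyticOnNhd ℝ g U := fun z hz =>
    ((EuclideanSpace.proj i₀ : EuclideanSpace ℝ (Fin n) →L[ℝ] ℝ).analyticAt _).comp (hf z hz)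
  have hgx₀ : g x₀ ≠ 0 := hi₀
  have hsub : {x ∈ U | f x = 0} ⊆ {x ∈ U | g x = 0} := by
    rintro z ⟨hz, hz0⟩
    refine ⟨hz, ?_⟩
    show f z i₀ = 0
    rw [hz0]
    rfl
  refine measure_mono_null hsub ?_
  -- no flat points for g on U
  have hflat : ∀ z ∈ U, ∃ k, iteratedFDeriv ℝ k g z ≠ 0 := by
    intro z hz
    by_contra hcon
    push_neg at hcon
    have hev : g =ᶠ[nhds z] 0 := by
      obtain ⟨p, r, hpr⟩ := hg z hz
      filter_upwards [Metric.eball_mem_nhds z hpr.r_pos] with x hx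
      have hx' : x - z ∈ Metric.eball (0 : EuclideanSpace ℝ (Fin m)) r := by
        simpa [Metric.mem_eball, edist_eq_enorm_sub, edist_zero_right] using hx
      have hsum := hpr.hasSum_iteratedFDeriv hx'
      simp only [hcon, ContinuousMultilinearMap.zero_apply, smul_zero] at hsum
      have : g (z + (x - z)) = 0 := hsum.unique hasSum_zero
      simpa using this
    have := hg.eqOn_zero_of_preconnected_of_eventuallyEq_zero hconn.isPreconnected hz hev
    exact hgx₀ (this hx₀U)
  -- stratification by the first nonvanishing derivative
  have hcover : {x ∈ U | g x = 0} ⊆ ⋃ k : ℕ,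
      {z ∈ U | iteratedFDeriv ℝ k g z = 0 ∧ iteratedFDeriv ℝ (k + 1) g z ≠ 0} := by
    rintro z ⟨hz, hz0⟩
    have hP : ∃ k, iteratedFDeriv ℝ k g z ≠ 0 := hflat z hz
    have h0 : iteratedFDeriv ℝ 0 g z = 0 := by
      ext v
      simp [hz0]
    have hk₀pos : Nat.find hP ≠ 0 := by
      intro hcon
      exact (hcon ▸ Nat.find_spec hP) h0
    obtain ⟨k, hk⟩ := Nat.exists_eq_succ_of_ne_zero hk₀pos
    refine mem_iUnion.2 ⟨k, hz, ?_, ?_⟩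
    · by_contra hne
      exact Nat.find_min hP (hk ▸ k.lt_succ_self) hne
    · have := Nat.find_spec hP
      rwa [hk] at this
  refine measure_mono_null hcover (measure_iUnion_null fun k => ?_)
  apply measure_null_of_locally_null
  rintro y ⟨hyU, hDk, hDk1⟩
  obtain ⟨r, hr, hballU, hnull⟩ := loc_null hU hg hyU hDk1
  refine ⟨{z ∈ U | iteratedFDeriv ℝ k g z = 0 ∧ iteratedFDeriv ℝ (k + 1) g z ≠ 0} ∩
      Metric.ball y r, ?_, ?_⟩
  · exact Filter.inter_mem self_mem_nhdsWithin
      (mem_nhdsWithin_of_mem_nhds (Metric.ball_mem_nhds y hr))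
  · refine measure_mono_null ?_ hnull
    rintro z ⟨⟨hzU, hz0, _⟩, hzB⟩
    exact ⟨hzB, hz0⟩
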